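/- Let π : ℕ → X be a trace, c : ℕ → Fin n a counter, and Js : Fin n → X → Prop. Suppose: whenever Js (c t) (π (t+1)) holds we have c(t+1) = c(t) ⊕ 1 (mod n), otherwise c(t+1) = c(t); and suppose for every t and every j, if c(t) = j forever after t (i.e., ∀ s ≥ t, c s = j) then there exists s ≥ t with Js j (π (s+1)). Then for every j : Fin n, Js j (π (t+1)) holds for infinitely many t. -/

import Mathlib

theorem round_robin_substrategies_satisfy_all_guarantees
    {X : Type*} {n : ℕ} [NeZero n] (π : ℕ → X) (c : ℕ → Fin n) (Js : Fin n → X → Prop)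
    (hswitch : ∀ t, Js (c t) (π (t + 1)) → c (t + 1) = c t + 1)
    (hstay : ∀ t, ¬ Js (c t) (π (t + 1)) → c (t + 1) = c t)
    (hprog : ∀ t, ∀ j : Fin n, (∀ s ≥ t, c s = j) → ∃ s ≥ t, Js j (π (s + 1))) :
    ∀ j : Fin n, ∀ N, ∃ t ≥ N, Js j (π (t + 1)) := by
  open Fin.NatCast Fin.CommRing in
  classical
  -- Main lemma: from any time t, there is s ≥ t with c s = c t, Js (c t) holds at s,
  -- and the counter switches.
  have main : ∀ t, ∃ s ≥ t, c s = c t ∧ Js (c t) (π (s + 1)) ∧ c (s + 1) = c t + 1 := by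
    intro t
    by_cases hconst : ∀ s ≥ t, c s = c t
    · obtain ⟨s, hs, hJ⟩ := hprog t (c t) hconst
      have hcs := hconst s hs
      refine ⟨s, hs, hcs, hJ, ?_⟩
      have := hswitch s (by rwa [hcs])
      rw [this, hcs]
    · push_neg at hconst
      obtain ⟨s, hs, hne⟩ := hconst
      have hex : ∃ m, t ≤ m ∧ c m ≠ c t := ⟨s, hs, hne⟩
      set m := Nat.find hex with hmdef
      obtain ⟨hm1, hm2⟩ := Nat.find_spec hex
      have hmt : m ≠ t := fun h => hm2 (by rw [← hmdef, h])
      obtain ⟨k, hk⟩ : ∃ k, m = k + 1 := ⟨m - 1, by omega⟩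
      have hkt : t ≤ k := by omega
      have hck : c k = c t := by
        by_contra h
        have := Nat.find_min hex (m := k) (by omega)
        exact this ⟨hkt, h⟩
      have hne' : c (k + 1) ≠ c k := by rw [hck, ← hk]; exact hm2
      have hJ : Js (c k) (π (k + 1)) := by
        by_contra h
        exact hne' (hstay k h)
      refine ⟨k, hkt, hck, by rwa [hck] at hJ, ?_⟩
      rw [hswitch k hJ, hck]
  -- counter reaches c t + m for every m
  have reach : ∀ t, ∀ m : ℕ, ∃ s ≥ t, c s = c t + (m : Fin n) := by
    intro t m
    induction m with
    | zero => exact ⟨t, le_refl t, by simp⟩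
    | succ m ih =>
      obtain ⟨s, hs, hcs⟩ := ih
      obtain ⟨s', hs', hcs', _, hsw⟩ := main s
      refine ⟨s' + 1, by omega, ?_⟩
      rw [hsw, hcs]
      push_cast
      ring
  intro j N
  obtain ⟨s, hs, hcs⟩ := reach N ((j - c N : Fin n) : ℕ)
  have hcsj : c s = j := by
    rw [hcs, Fin.cast_val_eq_self]
    ring
  obtain ⟨s', hs', hcs', hJ, _⟩ := main s
  exact ⟨s', by omega, by rwa [hcsj] at hJ⟩
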